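/- arXiv:1410.6539 — 6 statements merged into one kernel-verified Lean document; each statement's English description precedes it below -/
import Mathlib

section
/- Let A be a subalgebra of c₀(ℕ) containing e_n for every n ∈ ℕ, equipped with a submultiplicative norm ‖·‖_A under which A is complete (so (A, ‖·‖_A) is a Banach algebra), and suppose the span c_f(ℕ) of {e_n} is dense in (A, ‖·‖_A). Then A is spectral invariant in c₀(ℕ): an element a ∈ A has a quasi-inverse in A if and only if it has a quasi-inverse in c₀(ℕ). -/
open Filter Topology

noncomputable section

/-- `c₀(ℕ)`: complex sequences vanishing at infinity. -/
def c0 : Set (ℕ → ℂ) := {f | Filter.Tendsto f Filter.atTop (nhds (0 : ℂ))}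

/-- The sup norm `‖f‖_∞`. -/
noncomputable def supNorm (f : ℕ → ℂ) : ℝ := ⨆ n, ‖f n‖

/-- The `n`-th block seminorm `2σ(n)·max{|f(2n)+r·f(2n+1)|, σ(n)·|f(2n+1)−r·f(2n)|}`. -/
noncomputable def blockNorm (r : ℝ) (σ : ℕ → ℝ) (f : ℕ → ℂ) (n : ℕ) : ℝ :=
  2 * σ n * max (‖f (2 * n) + (r : ℂ) * f (2 * n + 1)‖)
                (σ n * ‖f (2 * n + 1) - (r : ℂ) * f (2 * n)‖)

/-- The norm `‖f‖_{r,σ} = sup_n blockNorm r σ f n`. -/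
noncomputable def Anorm (r : ℝ) (σ : ℕ → ℝ) (f : ℕ → ℂ) : ℝ := ⨆ n, blockNorm r σ f n

/-- The algebra `A_{r,σ}`: elements of `c₀(ℕ)` whose block norms tend to `0`. -/
def Aset (r : ℝ) (σ : ℕ → ℝ) : Set (ℕ → ℂ) :=
  {f | f ∈ c0 ∧ Filter.Tendsto (blockNorm r σ f) Filter.atTop (nhds (0 : ℝ))}

/-- The unit step function `e_n`. -/
def eFun (n : ℕ) : ℕ → ℂ := fun k => if k = n then 1 else 0

/-- A dense Banach subalgebra of `c₀(ℕ)` containing all `e_n`, in which the span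
`c_f(ℕ)` of the `e_n` is dense, is spectral invariant in `c₀(ℕ)`. -/
theorem spectral_invariance_of_cf_dense
    (A : NonUnitalSubalgebra ℂ (ℕ → ℂ))
    (hA : (A : Set (ℕ → ℂ)) ⊆ c0)
    (heA : ∀ n : ℕ, eFun n ∈ A)
    (N : (ℕ → ℂ) → ℝ)
    (hNdef : ∀ f ∈ A, (N f = 0 ↔ f = 0))
    (hNadd : ∀ f ∈ A, ∀ g ∈ A, N (f + g) ≤ N f + N g)
    (hNsmul : ∀ (c : ℂ), ∀ f ∈ A, N (c • f) = ‖c‖ * N f)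
    (hNmul : ∀ f ∈ A, ∀ g ∈ A, N (f * g) ≤ N f * N g)
    (hcomplete : ∀ u : ℕ → (ℕ → ℂ), (∀ k, u k ∈ A) →
      (∀ ε > (0 : ℝ), ∃ M : ℕ, ∀ m ≥ M, ∀ n ≥ M, N (u m - u n) < ε) →
      ∃ f ∈ A, Filter.Tendsto (fun k => N (u k - f)) Filter.atTop (nhds (0 : ℝ)))
    (hdense : ∀ f ∈ A, ∀ ε > (0 : ℝ),
      ∃ g ∈ Submodule.span ℂ (Set.range eFun), N (f - g) < ε)
    (a : ℕ → ℂ) (ha : a ∈ A) :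
    (∃ b ∈ A, a + b - a * b = 0 ∧ b + a - b * a = 0) ↔
    (∃ b ∈ c0, a + b - a * b = 0 ∧ b + a - b * a = 0) := by
  classical
  -- basic facts about N
  have hN0 : N 0 = 0 := by
    have h := hNsmul 0 0 (zero_mem A)
    simpa using h
  have hNneg : ∀ f ∈ A, N (-f) = N f := by
    intro f hf
    have h := hNsmul (-1) f hf
    simpa using h
  have hNnonneg : ∀ f ∈ A, 0 ≤ N f := by
    intro f hf
    have h := hNadd f hf (-f) (neg_mem hf)
    rw [add_neg_cancel, hN0, hNneg f hf] at h
    linarith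
  have heval : ∀ f ∈ A, ∀ n, ‖f n‖ ≤ N f := by
    intro f hf n
    have he : eFun n ≠ 0 := by
      intro h
      have := congrFun h n
      simp [eFun] at this
    have hepos : 0 < N (eFun n) := by
      rcases lt_or_eq_of_le (hNnonneg _ (heA n)) with h | h
      · exact h
      · exact absurd ((hNdef _ (heA n)).mp h.symm) he
    have hfe : f * eFun n = (f n) • eFun n := by
      funext m
      by_cases hm : m = n <;> simp [eFun, hm]
    have h1 : N (f * eFun n) ≤ N f * N (eFun n) := hNmul f hf _ (heA n)
    rw [hfe, hNsmul _ _ (heA n)] at h1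
    exact le_of_mul_le_mul_right h1 hepos
  have hpow : ∀ (f : ℕ → ℂ), f ∈ A → ∀ k : ℕ, f ^ (k + 1) ∈ A := by
    intro f hf k
    induction k with
    | zero => simpa using hf
    | succ m ih => rw [pow_succ]; exact mul_mem ih hf
  have hNsum : ∀ (s : Finset ℕ) (f : ℕ → (ℕ → ℂ)), (∀ i ∈ s, f i ∈ A) →
      N (∑ i ∈ s, f i) ≤ ∑ i ∈ s, N (f i) := by
    intro s
    induction s using Finset.induction with
    | empty => intro f _; simp [hN0]
    | @insert i s hi ih =>
      intro f hf
      rw [Finset.sum_insert hi, Finset.sum_insert hi]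
      have h1 : f i ∈ A := hf i (Finset.mem_insert_self i s)
      have h2 : ∀ j ∈ s, f j ∈ A := fun j hj => hf j (Finset.mem_insert_of_mem hj)
      have h3 : (∑ j ∈ s, f j) ∈ A := sum_mem h2
      exact le_trans (hNadd _ h1 _ h3) (by linarith [ih f h2])
  constructor
  · rintro ⟨b, hbA, h1, h2⟩
    exact ⟨b, hA hbA, h1, h2⟩
  · rintro ⟨bc, hbc0, hq1, hq2⟩
    -- a never takes the value 1
    have hane : ∀ n, a n ≠ 1 := by
      intro n hn
      have h := congrFun hq1 n
      simp only [Pi.add_apply, Pi.sub_apply, Pi.mul_apply, Pi.zero_apply, hn, one_mul] at h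
      simp at h
    -- split a at level M where |a| < 1/2
    have hac0 : Filter.Tendsto a Filter.atTop (nhds (0 : ℂ)) := hA ha
    obtain ⟨M, hM⟩ := Metric.tendsto_atTop.mp hac0 (1/2) (by norm_num)
    have hM' : ∀ n, M ≤ n → ‖a n‖ < 1/2 := by
      intro n hn
      have := hM n hn
      simpa [Complex.dist_eq] using this
    set a'' : ℕ → ℂ := ∑ n ∈ Finset.range M, a n • eFun n with ha''def
    have ha''A : a'' ∈ A := sum_mem (fun n _ => SMulMemClass.smul_mem _ (heA n))
    have ha''ptw : ∀ m, a'' m = if m < M then a m else 0 := by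
      intro m
      rw [ha''def, Finset.sum_apply]
      simp only [Pi.smul_apply, eFun, smul_eq_mul, mul_ite, mul_one, mul_zero]
      rw [Finset.sum_ite_eq (Finset.range M) m a]
      simp [Finset.mem_range]
    set a' : ℕ → ℂ := a - a'' with ha'def
    have ha'A : a' ∈ A := sub_mem ha ha''A
    have ha'ptw : ∀ m, a' m = if m < M then 0 else a m := by
      intro m
      rw [ha'def]
      simp only [Pi.sub_apply, ha''ptw m]
      split_ifs <;> ring
    have ha'bound : ∀ m, ‖a' m‖ ≤ 1/2 := by
      intro m
      rw [ha'ptw m]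
      split_ifs with h
      · simp
      · exact le_of_lt (hM' m (le_of_not_gt h))
    -- approximate a' by g in the span
    obtain ⟨g, hgspan, hgclose⟩ := hdense a' ha'A (1/8) (by norm_num)
    obtain ⟨c, hc⟩ := Finsupp.mem_span_range_iff_exists_finsupp.mp hgspan
    have hgA : g ∈ A := by
      rw [← hc, Finsupp.sum]
      exact sum_mem (fun i _ => SMulMemClass.smul_mem _ (heA i))
    have hgm : ∀ m, g m = c m := by
      intro m
      rw [← hc, Finsupp.sum, Finset.sum_apply]
      simp only [Pi.smul_apply, eFun, smul_eq_mul, mul_ite, mul_one, mul_zero]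
      rw [Finset.sum_ite_eq c.support m (fun n => c n)]
      split_ifs with h
      · rfl
      · exact (Finsupp.notMem_support_iff.mp h).symm
    set d : ℕ → ℂ := a' - g with hddef
    have hdA : d ∈ A := sub_mem ha'A hgA
    have hdN : N d < 1/8 := hgclose
    have hdN0 : 0 ≤ N d := hNnonneg d hdA
    have hcn : ∀ n, ‖c n‖ ≤ 5/8 := by
      intro n
      have h1 : ‖a' n‖ ≤ 1/2 := ha'bound n
      have h2 : ‖d n‖ ≤ N d := heval d hdA n
      have h3 : g n = a' n - d n := by rw [hddef]; simp
      rw [← hgm n, h3]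
      calc ‖a' n - d n‖ ≤ ‖a' n‖ + ‖d n‖ := by
            simpa [sub_eq_add_neg] using norm_add_le (a' n) (-(d n))
        _ ≤ 1/2 + 1/8 := by linarith
        _ = 5/8 := by norm_num
    set C : ℝ := ∑ n ∈ c.support, N (eFun n) with hCdef
    have hC0 : 0 ≤ C := Finset.sum_nonneg (fun n _ => hNnonneg _ (heA n))
    set C' : ℝ := max C 1 with hC'def
    have hC'1 : (1:ℝ) ≤ C' := le_max_right _ _
    have hCC' : C ≤ C' := le_max_left _ _
    have hC'0 : (0:ℝ) ≤ C' := le_trans zero_le_one hC'1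
    -- norm bounds on powers of g
    have hgpow : ∀ j : ℕ, g ^ (j+1) = ∑ n ∈ c.support, ((c n)^(j+1)) • eFun n := by
      intro j
      funext m
      rw [Pi.pow_apply, hgm m, Finset.sum_apply]
      simp only [Pi.smul_apply, eFun, smul_eq_mul, mul_ite, mul_one, mul_zero]
      rw [Finset.sum_ite_eq c.support m (fun n => (c n)^(j+1))]
      split_ifs with h
      · rfl
      · rw [Finsupp.notMem_support_iff.mp h, zero_pow (Nat.succ_ne_zero j)]
    have hgpowN : ∀ j : ℕ, N (g ^ (j+1)) ≤ C * (5/8)^(j+1) := by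
      intro j
      rw [hgpow j]
      refine le_trans (hNsum _ _ (fun n _ => SMulMemClass.smul_mem _ (heA n))) ?_
      have hb : ∀ n ∈ c.support, N (((c n)^(j+1)) • eFun n) ≤ (5/8)^(j+1) * N (eFun n) := by
        intro n _
        rw [hNsmul _ _ (heA n), norm_pow]
        exact mul_le_mul_of_nonneg_right
          (pow_le_pow_left₀ (norm_nonneg _) (hcn n) _) (hNnonneg _ (heA n))
      refine le_trans (Finset.sum_le_sum hb) ?_
      rw [← Finset.mul_sum, hCdef]
      ring_nf
      exact le_refl _
    have hdpowN : ∀ j : ℕ, N (d ^ (j+1)) ≤ (1/8)^(j+1) := by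
      intro j
      induction j with
      | zero => simpa using le_of_lt hdN
      | succ m ih =>
        rw [pow_succ]
        refine le_trans (hNmul _ (hpow d hdA m) _ hdA) ?_
        rw [pow_succ]
        exact mul_le_mul ih (le_of_lt hdN) hdN0 (pow_nonneg (by norm_num) _)
    -- the key geometric bound on powers of a'
    have hkey : ∀ j : ℕ, N (a' ^ (j+1)) ≤ C' * (3/4)^(j+1) := by
      intro j
      have h58 : (0:ℝ) ≤ 5/8 := by norm_num
      have h18 : (0:ℝ) ≤ 1/8 := by norm_num
      set k : ℕ := j + 1 with hkdef
      have hgd : g + d = a' := by rw [hddef]; ring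
      have hbd : ∀ i, i ≤ k → g ^ i * d ^ (k - i) ∈ A ∧
          N (g ^ i * d ^ (k - i)) ≤ C' * ((5/8)^i * (1/8)^(k-i)) := by
        intro i hi
        rcases Nat.eq_zero_or_pos i with hi0 | hip
        · subst hi0
          simp only [pow_zero, one_mul, Nat.sub_zero]
          constructor
          · rw [hkdef]; exact hpow d hdA j
          · rw [hkdef]
            refine le_trans (hdpowN j) ?_
            exact le_mul_of_one_le_left (pow_nonneg h18 _) hC'1
        · obtain ⟨i', rfl⟩ := Nat.exists_eq_succ_of_ne_zero (Nat.pos_iff_ne_zero.mp hip)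
          rcases Nat.lt_or_ge (i' + 1) k with hlt | hge
          · obtain ⟨l, hl⟩ : ∃ l, k - (i' + 1) = l + 1 := ⟨k - (i' + 1) - 1, by omega⟩
            rw [hl]
            constructor
            · exact mul_mem (hpow g hgA i') (hpow d hdA l)
            · refine le_trans (hNmul _ (hpow g hgA i') _ (hpow d hdA l)) ?_
              have h1 := hgpowN i'
              have h2 := hdpowN l
              have h3 : N (g ^ (i'+1)) * N (d ^ (l+1)) ≤ (C * (5/8)^(i'+1)) * ((1/8)^(l+1)) :=
                mul_le_mul h1 h2 (hNnonneg _ (hpow d hdA l)) (by positivity)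
              refine le_trans h3 ?_
              rw [mul_assoc]
              exact mul_le_mul_of_nonneg_right hCC'
                (mul_nonneg (pow_nonneg h58 _) (pow_nonneg h18 _))
          · have hik : k - (i' + 1) = 0 := by omega
            have hik' : i' + 1 = k := le_antisymm hi hge
            rw [hik]
            simp only [pow_zero, mul_one]
            constructor
            · exact hpow g hgA i'
            · refine le_trans (hgpowN i') ?_
              exact mul_le_mul_of_nonneg_right hCC' (pow_nonneg h58 _)
      have hterm : ∀ i, g ^ i * d ^ (k - i) * ((k.choose i : ℕ) : ℕ → ℂ)
          = ((k.choose i : ℕ) : ℂ) • (g ^ i * d ^ (k - i)) := by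
        intro i
        funext m
        simp only [Pi.mul_apply, Pi.pow_apply, Pi.natCast_apply, Pi.smul_apply, smul_eq_mul]
        ring
      have hmemr : ∀ i ∈ Finset.range (k+1),
          ((k.choose i : ℕ) : ℂ) • (g ^ i * d ^ (k - i)) ∈ A := by
        intro i hi
        exact SMulMemClass.smul_mem _ (hbd i (by simpa [Nat.lt_succ_iff] using hi)).1
      calc N (a' ^ k) = N ((g + d) ^ k) := by rw [hgd]
        _ = N (∑ i ∈ Finset.range (k+1), ((k.choose i : ℕ) : ℂ) • (g ^ i * d ^ (k - i))) := by
            rw [add_pow]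
            congr 1
            exact Finset.sum_congr rfl (fun i _ => hterm i)
        _ ≤ ∑ i ∈ Finset.range (k+1), N (((k.choose i : ℕ) : ℂ) • (g ^ i * d ^ (k - i))) :=
            hNsum _ _ hmemr
        _ ≤ ∑ i ∈ Finset.range (k+1), (5/8:ℝ)^i * (1/8)^(k-i) * (k.choose i) * C' := by
            refine Finset.sum_le_sum ?_
            intro i hi
            have hik : i ≤ k := by simpa [Nat.lt_succ_iff] using hi
            rw [hNsmul _ _ (hbd i hik).1, Complex.norm_natCast]
            calc (k.choose i : ℝ) * N (g ^ i * d ^ (k - i))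
                ≤ (k.choose i : ℝ) * (C' * ((5/8)^i * (1/8)^(k-i))) :=
                  mul_le_mul_of_nonneg_left (hbd i hik).2 (Nat.cast_nonneg _)
              _ = (5/8:ℝ)^i * (1/8)^(k-i) * (k.choose i) * C' := by ring
        _ = ((5/8 : ℝ) + 1/8) ^ k * C' := by rw [← Finset.sum_mul, ← add_pow]
        _ = C' * (3/4) ^ k := by norm_num [mul_comm]
    -- the partial sums of the Neumann series
    set u : ℕ → (ℕ → ℂ) := fun p => ∑ i ∈ Finset.range p, a' ^ (i+1) with hudef
    have huA : ∀ p, u p ∈ A := fun p => sum_mem (fun i _ => hpow a' ha'A i)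
    have hu_rec : ∀ p, u (p+1) = u p * a' + a' := by
      intro p
      show (∑ i ∈ Finset.range (p+1), a' ^ (i+1)) = (∑ i ∈ Finset.range p, a' ^ (i+1)) * a' + a'
      rw [Finset.sum_range_succ' (fun i => a' ^ (i+1)) p, Finset.sum_mul]
      simp [pow_succ]
    have hgeo : ∀ n : ℕ, ∑ i ∈ Finset.range n, (3/4:ℝ)^i ≤ 4 := by
      intro n
      rw [geom_sum_eq (by norm_num : (3/4:ℝ) ≠ 1) n]
      have h1 : (0:ℝ) ≤ (3/4:ℝ)^n := by positivity
      have h2 : ((3/4:ℝ)^n - 1) / ((3/4:ℝ) - 1) = 4 * (1 - (3/4:ℝ)^n) := by ring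
      rw [h2]
      nlinarith
    have htail : ∀ p q : ℕ, p ≤ q → N (u q - u p) ≤ C' * 4 * (3/4)^(p+1) := by
      intro p q hpq
      have hsum : u q - u p = ∑ i ∈ Finset.Ico p q, a' ^ (i+1) :=
        (Finset.sum_Ico_eq_sub (fun i => a' ^ (i+1)) hpq).symm
      rw [hsum]
      refine le_trans (hNsum _ _ (fun i _ => hpow a' ha'A i)) ?_
      refine le_trans (Finset.sum_le_sum (fun i _ => hkey i)) ?_
      rw [← Finset.mul_sum]
      have h2 : ∑ i ∈ Finset.Ico p q, (3/4:ℝ)^(i+1) ≤ 4 * (3/4)^(p+1) := by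
        rw [Finset.sum_Ico_eq_sum_range]
        have h3 : ∀ i ∈ Finset.range (q - p), (3/4:ℝ)^(p+i+1) = (3/4:ℝ)^(p+1) * (3/4:ℝ)^i := by
          intro i _
          rw [← pow_add]
          ring_nf
        rw [Finset.sum_congr rfl h3, ← Finset.mul_sum]
        have := hgeo (q - p)
        nlinarith [pow_nonneg (by norm_num : (0:ℝ) ≤ 3/4) (p+1)]
      calc C' * ∑ i ∈ Finset.Ico p q, (3/4:ℝ)^(i+1) ≤ C' * (4 * (3/4)^(p+1)) :=
            mul_le_mul_of_nonneg_left h2 hC'0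
        _ = C' * 4 * (3/4)^(p+1) := by ring
    have hcau : ∀ ε > (0:ℝ), ∃ K : ℕ, ∀ m ≥ K, ∀ n ≥ K, N (u m - u n) < ε := by
      intro ε hε
      have hto : Filter.Tendsto (fun p : ℕ => C' * 4 * (3/4:ℝ)^(p+1)) Filter.atTop (nhds 0) := by
        have h0 : Filter.Tendsto (fun p : ℕ => (3/4:ℝ)^p) Filter.atTop (nhds 0) :=
          tendsto_pow_atTop_nhds_zero_of_lt_one (by norm_num) (by norm_num)
        have h1 := (h0.comp (Filter.tendsto_add_atTop_nat 1)).const_mul (C' * 4)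
        simpa [Function.comp] using h1
      have hev := hto.eventually (gt_mem_nhds hε)
      obtain ⟨K, hK⟩ := Filter.eventually_atTop.mp hev
      refine ⟨K, fun m hm n hn => ?_⟩
      rcases le_total n m with h | h
      · exact lt_of_le_of_lt (htail n m h) (hK n hn)
      · have hflip : u m - u n = -(u n - u m) := by ring
        rw [hflip, hNneg _ (sub_mem (huA n) (huA m))]
        exact lt_of_le_of_lt (htail m n h) (hK m hm)
    obtain ⟨w, hwA, hwlim⟩ := hcomplete u huA hcau
    have hptw : ∀ n, Filter.Tendsto (fun p => u p n) Filter.atTop (nhds (w n)) := by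
      intro n
      rw [tendsto_iff_norm_sub_tendsto_zero]
      refine squeeze_zero (fun p => norm_nonneg _) (fun p => ?_) hwlim
      calc ‖u p n - w n‖ = ‖(u p - w) n‖ := by simp
        _ ≤ N (u p - w) := heval _ (sub_mem (huA p) hwA) n
    have hwn : ∀ n, w n = w n * a' n + a' n := by
      intro n
      have h1 : Filter.Tendsto (fun p => u (p+1) n) Filter.atTop (nhds (w n)) := by
        have := (hptw n).comp (Filter.tendsto_add_atTop_nat 1)
        exact this
      have h2 : (fun p => u (p+1) n) = fun p => u p n * a' n + a' n := by
        funext p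
        rw [hu_rec p]
        simp
      rw [h2] at h1
      have h3 : Filter.Tendsto (fun p => u p n * a' n + a' n) Filter.atTop
          (nhds (w n * a' n + a' n)) := ((hptw n).mul_const (a' n)).add_const (a' n)
      exact tendsto_nhds_unique h1 h3
    -- assemble the quasi-inverse
    set b'' : ℕ → ℂ := ∑ n ∈ Finset.range M, (a n / (a n - 1)) • eFun n with hb''def
    have hb''A : b'' ∈ A := sum_mem (fun n _ => SMulMemClass.smul_mem _ (heA n))
    have hb''ptw : ∀ m, b'' m = if m < M then a m / (a m - 1) else 0 := by
      intro m
      rw [hb''def, Finset.sum_apply]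
      simp only [Pi.smul_apply, eFun, smul_eq_mul, mul_ite, mul_one, mul_zero]
      rw [Finset.sum_ite_eq (Finset.range M) m (fun n => a n / (a n - 1))]
      simp [Finset.mem_range]
    set b : ℕ → ℂ := (-w) + b'' - (-w) * b'' with hbdef
    have hbA : b ∈ A := sub_mem (add_mem (neg_mem hwA) hb''A) (mul_mem (neg_mem hwA) hb''A)
    have hmain : a + b - a * b = 0 := by
      funext n
      have e0 : a n = a' n + a'' n := by
        rw [ha'ptw n, ha''ptw n]
        split_ifs <;> ring
      have e3 : a' n * a'' n = 0 := by
        rw [ha'ptw n, ha''ptw n]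
        split_ifs <;> ring
      have e1 : a' n + (-(w n)) - a' n * (-(w n)) = 0 := by linear_combination -(hwn n)
      have e2 : a'' n + b'' n - a'' n * b'' n = 0 := by
        rw [ha''ptw n, hb''ptw n]
        split_ifs with h
        · have hne : a n - 1 ≠ 0 := sub_ne_zero.mpr (hane n)
          field_simp
          ring
        · ring
      have hbn : b n = (-(w n)) + b'' n - (-(w n)) * b'' n := by
        rw [hbdef]
        simp
      simp only [Pi.add_apply, Pi.sub_apply, Pi.mul_apply, Pi.zero_apply]
      rw [hbn]
      linear_combination (1 - ((-(w n)) + b'' n - (-(w n)) * b'' n)) * e0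
        + (1 - a'' n) * (1 - b'' n) * e1 + e2 + (1 - (-(w n))) * (1 - b'' n) * e3
    refine ⟨b, hbA, hmain, ?_⟩
    funext n
    have h := congrFun hmain n
    simp only [Pi.add_apply, Pi.sub_apply, Pi.mul_apply, Pi.zero_apply] at h ⊢
    linear_combination h
end
end

section
/- Let r ∈ ℝ and σ ∈ [1, ∞), and set D = (1/(1+r²))·max{1 + |r|/σ, |r| + 1/σ}. Then ‖v‖_max ≤ D·‖v‖_{r,σ} for all v ∈ ℂ², and D is the smallest constant with this property: for every D' < D there exists v ∈ ℂ² with ‖v‖_max > D'·‖v‖_{r,σ}. -/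
noncomputable section

/-- The `C*`-norm `‖(x,y)‖_max = max{|x|, |y|}` on `ℂ²`. -/
noncomputable def normMax (v : ℂ × ℂ) : ℝ := max ‖v.1‖ ‖v.2‖

/-- The norm `‖(x,y)‖_{r,σ} = max{|x + r·y|, σ·|y − r·x|}` on `ℂ²`. -/
noncomputable def normRS (r σ : ℝ) (v : ℂ × ℂ) : ℝ :=
  max ‖v.1 + (r : ℂ) * v.2‖ (σ * ‖v.2 - (r : ℂ) * v.1‖)

/-- Coordinatewise multiplication on `ℂ²`. -/
def cmul (v w : ℂ × ℂ) : ℂ × ℂ := (v.1 * w.1, v.2 * w.2)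

/-- `D = (1/(1+r²))·max{1 + |r|/σ, |r| + 1/σ}` is the smallest constant with
`‖v‖_max ≤ D·‖v‖_{r,σ}` for all `v ∈ ℂ²`. -/
theorem normMax_le_D_normRS_and_optimal (r σ : ℝ) (hσ : 1 ≤ σ) :
    (∀ v : ℂ × ℂ,
      normMax v ≤ (1 / (1 + r ^ 2)) * max (1 + |r| / σ) (|r| + 1 / σ) * normRS r σ v) ∧
    (∀ D' : ℝ, D' < (1 / (1 + r ^ 2)) * max (1 + |r| / σ) (|r| + 1 / σ) →
      ∃ v : ℂ × ℂ, D' * normRS r σ v < normMax v) := by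
  have hσ0 : (0:ℝ) < σ := lt_of_lt_of_le one_pos hσ
  have hr2 : (0:ℝ) < 1 + r ^ 2 := by positivity
  have habsr : (0:ℝ) ≤ |r| := abs_nonneg r
  constructor
  · rintro ⟨x, y⟩
    set M := normRS r σ (x, y) with hMdef
    have h1 : norm (x + (r:ℂ) * y) ≤ M := le_max_left _ _
    have h2 : σ * norm (y - (r:ℂ) * x) ≤ M := le_max_right _ _
    have h2' : norm (y - (r:ℂ) * x) ≤ M / σ := by
      rw [le_div_iff₀ hσ0]; linarith
    have hM0 : 0 ≤ M := le_trans (norm_nonneg _) h1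
    have hx : (1 + r ^ 2) * norm x ≤ M * (1 + |r| / σ) := by
      have key : (((1 + r ^ 2 : ℝ)) : ℂ) * x = (x + (r:ℂ) * y) - (r:ℂ) * (y - (r:ℂ) * x) := by
        push_cast; ring
      have := congrArg norm key
      rw [norm_mul, Complex.norm_real, Real.norm_eq_abs, abs_of_pos hr2] at this
      have tri : norm ((x + (r:ℂ) * y) - (r:ℂ) * (y - (r:ℂ) * x)) ≤
          norm (x + (r:ℂ) * y) + norm ((r:ℂ) * (y - (r:ℂ) * x)) := by
        simpa using
          norm_sub_le (x + (r:ℂ) * y) ((r:ℂ) * (y - (r:ℂ) * x))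
      rw [norm_mul, Complex.norm_real, Real.norm_eq_abs] at tri
      have hrb : |r| * norm (y - (r:ℂ) * x) ≤ |r| * (M / σ) :=
        mul_le_mul_of_nonneg_left h2' habsr
      have : (1 + r ^ 2) * norm x ≤ M + |r| * (M / σ) := by
        rw [this]; linarith
      calc (1 + r ^ 2) * norm x ≤ M + |r| * (M / σ) := this
        _ = M * (1 + |r| / σ) := by ring
    have hy : (1 + r ^ 2) * norm y ≤ M * (|r| + 1 / σ) := by
      have key : (((1 + r ^ 2 : ℝ)) : ℂ) * y = (y - (r:ℂ) * x) + (r:ℂ) * (x + (r:ℂ) * y) := by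
        push_cast; ring
      have := congrArg norm key
      rw [norm_mul, Complex.norm_real, Real.norm_eq_abs, abs_of_pos hr2] at this
      have tri : norm ((y - (r:ℂ) * x) + (r:ℂ) * (x + (r:ℂ) * y)) ≤
          norm (y - (r:ℂ) * x) + norm ((r:ℂ) * (x + (r:ℂ) * y)) := by
        simpa using
          norm_add_le (y - (r:ℂ) * x) ((r:ℂ) * (x + (r:ℂ) * y))
      rw [norm_mul, Complex.norm_real, Real.norm_eq_abs] at tri
      have hrb : |r| * norm (x + (r:ℂ) * y) ≤ |r| * M :=
        mul_le_mul_of_nonneg_left h1 habsr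
      have : (1 + r ^ 2) * norm y ≤ M / σ + |r| * M := by
        rw [this]; linarith
      calc (1 + r ^ 2) * norm y ≤ M / σ + |r| * M := this
        _ = M * (|r| + 1 / σ) := by ring
    have hmax1 : (1 + |r| / σ) ≤ max (1 + |r| / σ) (|r| + 1 / σ) := le_max_left _ _
    have hmax2 : (|r| + 1 / σ) ≤ max (1 + |r| / σ) (|r| + 1 / σ) := le_max_right _ _
    have goalx : norm x ≤ (1 / (1 + r ^ 2)) * max (1 + |r| / σ) (|r| + 1 / σ) * M := by
      rw [div_mul_eq_mul_div, one_mul, div_mul_eq_mul_div, le_div_iff₀ hr2]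
      calc norm x * (1 + r ^ 2) = (1 + r ^ 2) * norm x := by ring
        _ ≤ M * (1 + |r| / σ) := hx
        _ ≤ max (1 + |r| / σ) (|r| + 1 / σ) * M := by
            rw [mul_comm]; exact mul_le_mul_of_nonneg_right hmax1 hM0
    have goaly : norm y ≤ (1 / (1 + r ^ 2)) * max (1 + |r| / σ) (|r| + 1 / σ) * M := by
      rw [div_mul_eq_mul_div, one_mul, div_mul_eq_mul_div, le_div_iff₀ hr2]
      calc norm y * (1 + r ^ 2) = (1 + r ^ 2) * norm y := by ring
        _ ≤ M * (|r| + 1 / σ) := hy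
        _ ≤ max (1 + |r| / σ) (|r| + 1 / σ) * M := by
            rw [mul_comm]; exact mul_le_mul_of_nonneg_right hmax2 hM0
    exact max_le goalx goaly
  · intro D' hD'
    set s : ℝ := if 0 ≤ r then 1 else -1 with hsdef
    have hs : r * s = |r| := by
      rw [hsdef]; split_ifs with h
      · rw [abs_of_nonneg h]; ring
      · rw [abs_of_neg (lt_of_not_ge h)]; ring
    have hs1 : |s| = 1 := by
      rw [hsdef]; split_ifs <;> norm_num
    rw [mul_max_of_nonneg _ _ (by positivity : (0:ℝ) ≤ 1 / (1 + r ^ 2))] at hD'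
    rcases lt_max_iff.mp hD' with h | h
    · -- witness v1
      refine ⟨(((1 + |r| / σ) / (1 + r ^ 2) : ℝ), ((r - s / σ) / (1 + r ^ 2) : ℝ)), ?_⟩
      have e1r : (1 + |r| / σ) / (1 + r ^ 2) + r * ((r - s / σ) / (1 + r ^ 2)) = 1 := by
        rw [← hs]; field_simp; ring
      have e2r : (r - s / σ) / (1 + r ^ 2) - r * ((1 + |r| / σ) / (1 + r ^ 2)) = -s / σ := by
        rw [← hs]; field_simp; ring
      have e1 : (((1 + |r| / σ) / (1 + r ^ 2) : ℝ) : ℂ) +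
          (r:ℂ) * (((r - s / σ) / (1 + r ^ 2) : ℝ) : ℂ) = ((1:ℝ) : ℂ) := by
        exact_mod_cast congrArg Complex.ofReal e1r
      have e2 : (((r - s / σ) / (1 + r ^ 2) : ℝ) : ℂ) -
          (r:ℂ) * (((1 + |r| / σ) / (1 + r ^ 2) : ℝ) : ℂ) = ((-s / σ : ℝ) : ℂ) := by
        exact_mod_cast congrArg Complex.ofReal e2r
      have hRS : normRS r σ ((((1 + |r| / σ) / (1 + r ^ 2) : ℝ) : ℂ),
          (((r - s / σ) / (1 + r ^ 2) : ℝ) : ℂ)) = 1 := by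
        rw [normRS]
        simp only [e1, e2, Complex.norm_real, Real.norm_eq_abs]
        rw [abs_div, abs_neg, hs1, abs_of_pos hσ0]
        rw [mul_div_cancel₀ _ (ne_of_gt hσ0)]
        norm_num
      rw [hRS, mul_one]
      have hle : (1 / (1 + r ^ 2)) * (1 + |r| / σ) ≤ normMax ((((1 + |r| / σ) / (1 + r ^ 2) : ℝ) : ℂ),
          (((r - s / σ) / (1 + r ^ 2) : ℝ) : ℂ)) := by
        rw [normMax]
        refine le_trans ?_ (le_max_left _ _)
        rw [Complex.norm_real, Real.norm_eq_abs,
          show (1 / (1 + r ^ 2)) * (1 + |r| / σ) = (1 + |r| / σ) / (1 + r ^ 2) by ring]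
        exact le_abs_self _
      exact lt_of_lt_of_le h hle
    · -- witness v2
      refine ⟨(((s - r / σ) / (1 + r ^ 2) : ℝ), ((|r| + 1 / σ) / (1 + r ^ 2) : ℝ)), ?_⟩
      have e1r : (s - r / σ) / (1 + r ^ 2) + r * ((|r| + 1 / σ) / (1 + r ^ 2)) = s := by
        rw [← hs]; field_simp; ring
      have e2r : (|r| + 1 / σ) / (1 + r ^ 2) - r * ((s - r / σ) / (1 + r ^ 2)) = 1 / σ := by
        rw [← hs]; field_simp; ring
      have e1 : (((s - r / σ) / (1 + r ^ 2) : ℝ) : ℂ) +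
          (r:ℂ) * (((|r| + 1 / σ) / (1 + r ^ 2) : ℝ) : ℂ) = ((s:ℝ) : ℂ) := by
        exact_mod_cast congrArg Complex.ofReal e1r
      have e2 : (((|r| + 1 / σ) / (1 + r ^ 2) : ℝ) : ℂ) -
          (r:ℂ) * (((s - r / σ) / (1 + r ^ 2) : ℝ) : ℂ) = ((1 / σ : ℝ) : ℂ) := by
        exact_mod_cast congrArg Complex.ofReal e2r
      have hRS : normRS r σ ((((s - r / σ) / (1 + r ^ 2) : ℝ) : ℂ),
          (((|r| + 1 / σ) / (1 + r ^ 2) : ℝ) : ℂ)) = 1 := by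
        rw [normRS]
        simp only [e1, e2, Complex.norm_real, Real.norm_eq_abs]
        rw [hs1, abs_div, abs_of_pos hσ0, abs_one]
        rw [mul_div_cancel₀ _ (ne_of_gt hσ0)]
        norm_num
      rw [hRS, mul_one]
      have hle : (1 / (1 + r ^ 2)) * (|r| + 1 / σ) ≤ normMax ((((s - r / σ) / (1 + r ^ 2) : ℝ) : ℂ),
          (((|r| + 1 / σ) / (1 + r ^ 2) : ℝ) : ℂ)) := by
        rw [normMax]
        refine le_trans ?_ (le_max_right _ _)
        rw [Complex.norm_real, Real.norm_eq_abs,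
          show (1 / (1 + r ^ 2)) * (|r| + 1 / σ) = (|r| + 1 / σ) / (1 + r ^ 2) by ring]
        exact le_abs_self _
      exact lt_of_lt_of_le h hle
end
end

section
/- Let r ∈ ℝ and σ ∈ [1, ∞), and set C = (σ/(1+r²)²)·max{ |1+r³|/σ + 2|r²−r|/σ² + |r²+r|/σ³ , |r²−r| + 2|r²+r|/σ + |1−r³|/σ² }. Then ‖v * w‖_{r,σ} ≤ C·‖v‖_{r,σ}·‖w‖_{r,σ} for all v, w ∈ ℂ². -/
noncomputable section

private lemma aux_real (σ c1 c2 c3 A1 A2 B1 B2 N1 N2 : ℝ)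
    (hσ : 0 < σ) (hc1 : 0 ≤ c1) (hc2 : 0 ≤ c2) (hc3 : 0 ≤ c3)
    (hA1 : 0 ≤ A1) (hA2 : 0 ≤ A2) (hB1 : 0 ≤ B1) (hB2 : 0 ≤ B2)
    (h1 : A1 ≤ N1) (h2 : A2 ≤ N2) (h3 : σ * B1 ≤ N1) (h4 : σ * B2 ≤ N2) :
    c1 * (A1 * A2) + c2 * (A1 * B2 + B1 * A2) + c3 * (B1 * B2) ≤
      (c1 + 2 * c2 / σ + c3 / σ ^ 2) * (N1 * N2) := by
  have hB1' : B1 ≤ N1 / σ := by rw [le_div_iff₀ hσ]; nlinarith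
  have hB2' : B2 ≤ N2 / σ := by rw [le_div_iff₀ hσ]; nlinarith
  have hN1 : 0 ≤ N1 := le_trans hA1 h1
  have hN2 : 0 ≤ N2 := le_trans hA2 h2
  have key : c1 * (A1 * A2) + c2 * (A1 * B2 + B1 * A2) + c3 * (B1 * B2) ≤
      c1 * (N1 * N2) + c2 * (N1 * (N2 / σ) + (N1 / σ) * N2) + c3 * ((N1 / σ) * (N2 / σ)) := by
    gcongr <;> positivity
  have heq : c1 * (N1 * N2) + c2 * (N1 * (N2 / σ) + (N1 / σ) * N2) + c3 * ((N1 / σ) * (N2 / σ))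
      = (c1 + 2 * c2 / σ + c3 / σ ^ 2) * (N1 * N2) := by
    field_simp; ring
  linarith [key]

private lemma abs_tri3 (X Y Z : ℂ) :
    ‖X + Y + Z‖ ≤ ‖X‖ + ‖Y‖ + ‖Z‖ :=
  le_trans (norm_add_le _ _) (by gcongr; exact norm_add_le _ _)

/-- The multiplication bound for `‖·‖_{r,σ}` with the exact constant `C`. -/
theorem normRS_mul_le (r σ : ℝ) (hσ : 1 ≤ σ) :
    ∀ v w : ℂ × ℂ,
      normRS r σ (cmul v w) ≤
        σ / (1 + r ^ 2) ^ 2 *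
          max (|1 + r ^ 3| / σ + 2 * |r ^ 2 - r| / σ ^ 2 + |r ^ 2 + r| / σ ^ 3)
              (|r ^ 2 - r| + 2 * |r ^ 2 + r| / σ + |1 - r ^ 3| / σ ^ 2) *
          (normRS r σ v * normRS r σ w) := by
  intro v w
  have hσ0 : (0:ℝ) < σ := lt_of_lt_of_le one_pos hσ
  have hd : (0:ℝ) < (1 + r ^ 2) ^ 2 := by positivity
  have hdC : ((1 + r ^ 2 : ℝ) : ℂ) ^ 2 ≠ 0 := by
    exact_mod_cast pow_ne_zero 2 (by positivity : (1 + r ^ 2 : ℝ) ≠ 0)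
  set a1 : ℂ := v.1 + (r : ℂ) * v.2 with ha1
  set b1 : ℂ := v.2 - (r : ℂ) * v.1 with hb1
  set a2 : ℂ := w.1 + (r : ℂ) * w.2 with ha2
  set b2 : ℂ := w.2 - (r : ℂ) * w.1 with hb2
  set N1 := normRS r σ v with hN1
  set N2 := normRS r σ w with hN2
  have hA1 : ‖a1‖ ≤ N1 := le_max_left _ _
  have hA2 : ‖a2‖ ≤ N2 := le_max_left _ _
  have hB1 : σ * ‖b1‖ ≤ N1 := le_max_right _ _
  have hB2 : σ * ‖b2‖ ≤ N2 := le_max_right _ _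
  have hN1pos : 0 ≤ N1 := le_trans (norm_nonneg a1) hA1
  have hN2pos : 0 ≤ N2 := le_trans (norm_nonneg a2) hA2
  set M := max (|1 + r ^ 3| / σ + 2 * |r ^ 2 - r| / σ ^ 2 + |r ^ 2 + r| / σ ^ 3)
      (|r ^ 2 - r| + 2 * |r ^ 2 + r| / σ + |1 - r ^ 3| / σ ^ 2) with hM
  -- generic bound for a combination of the cross terms
  have bound : ∀ c1 c2 c3 : ℝ,
      ‖(c1 : ℂ) * (a1 * a2) + (c2 : ℂ) * (a1 * b2 + b1 * a2) + (c3 : ℂ) * (b1 * b2)‖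
        ≤ (|c1| + 2 * |c2| / σ + |c3| / σ ^ 2) * (N1 * N2) := by
    intro c1 c2 c3
    calc ‖(c1 : ℂ) * (a1 * a2) + (c2 : ℂ) * (a1 * b2 + b1 * a2) + (c3 : ℂ) * (b1 * b2)‖
        ≤ ‖(c1 : ℂ) * (a1 * a2)‖ + ‖(c2 : ℂ) * (a1 * b2 + b1 * a2)‖
            + ‖(c3 : ℂ) * (b1 * b2)‖ := abs_tri3 _ _ _
      _ ≤ |c1| * (‖a1‖ * ‖a2‖)
            + |c2| * (‖a1‖ * ‖b2‖ + ‖b1‖ * ‖a2‖)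
            + |c3| * (‖b1‖ * ‖b2‖) := by
          have t1 : ‖(c1 : ℂ) * (a1 * a2)‖
              = |c1| * (‖a1‖ * ‖a2‖) := by simp [map_mul]
          have t3 : ‖(c3 : ℂ) * (b1 * b2)‖
              = |c3| * (‖b1‖ * ‖b2‖) := by simp [map_mul]
          have t2 : ‖(c2 : ℂ) * (a1 * b2 + b1 * a2)‖
              ≤ |c2| * (‖a1‖ * ‖b2‖ + ‖b1‖ * ‖a2‖) := by
            rw [norm_mul, Complex.norm_real, Real.norm_eq_abs]
            exact mul_le_mul_of_nonneg_left
              (le_trans (norm_add_le _ _) (by simp [norm_mul])) (abs_nonneg _)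
          linarith
      _ ≤ (|c1| + 2 * |c2| / σ + |c3| / σ ^ 2) * (N1 * N2) :=
          aux_real σ _ _ _ _ _ _ _ N1 N2 hσ0 (abs_nonneg _) (abs_nonneg _) (abs_nonneg _)
            (norm_nonneg _) (norm_nonneg _) (norm_nonneg _)
            (norm_nonneg _) hA1 hA2 hB1 hB2
  simp only [normRS, cmul]
  apply max_le
  · -- first component
    have e1 : v.1 * w.1 + (r : ℂ) * (v.2 * w.2) =
        (((1 + r ^ 3 : ℝ) : ℂ) * (a1 * a2) + ((r ^ 2 - r : ℝ) : ℂ) * (a1 * b2 + b1 * a2)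
          + ((r ^ 2 + r : ℝ) : ℂ) * (b1 * b2)) / ((1 + r ^ 2 : ℝ) : ℂ) ^ 2 := by
      rw [eq_div_iff hdC, ha1, hb1, ha2, hb2]
      push_cast
      ring
    rw [e1, norm_div, norm_pow, Complex.norm_real, Real.norm_eq_abs,
      abs_of_pos (by positivity : (0:ℝ) < 1 + r ^ 2), div_le_iff₀ hd]
    have hMge : |1 + r ^ 3| / σ + 2 * |r ^ 2 - r| / σ ^ 2 + |r ^ 2 + r| / σ ^ 3 ≤ M :=
      le_max_left _ _
    have hsM : |1 + r ^ 3| + 2 * |r ^ 2 - r| / σ + |r ^ 2 + r| / σ ^ 2 ≤ σ * M := by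
      have : σ * (|1 + r ^ 3| / σ + 2 * |r ^ 2 - r| / σ ^ 2 + |r ^ 2 + r| / σ ^ 3)
          = |1 + r ^ 3| + 2 * |r ^ 2 - r| / σ + |r ^ 2 + r| / σ ^ 2 := by
        field_simp
      nlinarith [hMge]
    calc ‖((1 + r ^ 3 : ℝ) : ℂ) * (a1 * a2)
            + ((r ^ 2 - r : ℝ) : ℂ) * (a1 * b2 + b1 * a2) + ((r ^ 2 + r : ℝ) : ℂ) * (b1 * b2)‖
        ≤ (|1 + r ^ 3| + 2 * |r ^ 2 - r| / σ + |r ^ 2 + r| / σ ^ 2) * (N1 * N2) := bound _ _ _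
      _ ≤ (σ * M) * (N1 * N2) := by
          apply mul_le_mul_of_nonneg_right hsM (by positivity)
      _ = σ / (1 + r ^ 2) ^ 2 * M * (N1 * N2) * (1 + r ^ 2) ^ 2 := by
          field_simp
  · -- second component
    have e2 : v.2 * w.2 - (r : ℂ) * (v.1 * w.1) =
        (((r ^ 2 - r : ℝ) : ℂ) * (a1 * a2) + ((r ^ 2 + r : ℝ) : ℂ) * (a1 * b2 + b1 * a2)
          + ((1 - r ^ 3 : ℝ) : ℂ) * (b1 * b2)) / ((1 + r ^ 2 : ℝ) : ℂ) ^ 2 := by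
      rw [eq_div_iff hdC, ha1, hb1, ha2, hb2]
      push_cast
      ring
    rw [e2, norm_div, norm_pow, Complex.norm_real, Real.norm_eq_abs,
      abs_of_pos (by positivity : (0:ℝ) < 1 + r ^ 2)]
    rw [← mul_div_assoc, div_le_iff₀ hd]
    have hMge : |r ^ 2 - r| + 2 * |r ^ 2 + r| / σ + |1 - r ^ 3| / σ ^ 2 ≤ M :=
      le_max_right _ _
    calc σ * ‖((r ^ 2 - r : ℝ) : ℂ) * (a1 * a2)
            + ((r ^ 2 + r : ℝ) : ℂ) * (a1 * b2 + b1 * a2) + ((1 - r ^ 3 : ℝ) : ℂ) * (b1 * b2)‖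
        ≤ σ * ((|r ^ 2 - r| + 2 * |r ^ 2 + r| / σ + |1 - r ^ 3| / σ ^ 2) * (N1 * N2)) :=
          mul_le_mul_of_nonneg_left (bound _ _ _) hσ0.le
      _ ≤ σ * (M * (N1 * N2)) := by
          apply mul_le_mul_of_nonneg_left _ hσ0.le
          exact mul_le_mul_of_nonneg_right hMge (by positivity)
      _ = σ / (1 + r ^ 2) ^ 2 * M * (N1 * N2) * (1 + r ^ 2) ^ 2 := by
          field_simp
end
end

section
/- For every r ∈ ℝ, max{ |1+r³| + 2|r²−r| + |r²+r| , |r²−r| + 2|r²+r| + |1−r³| } ≤ 2(1+r²)²; consequently, for every r ∈ ℝ and σ ∈ [1, ∞), ‖v * w‖_{r,σ} ≤ 2σ·‖v‖_{r,σ}·‖w‖_{r,σ} for all v, w ∈ ℂ². -/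
noncomputable section

set_option maxHeartbeats 1000000 in
lemma key1 (r : ℝ) : |1 + r ^ 3| + 2 * |r ^ 2 - r| + |r ^ 2 + r| ≤ 2 * (1 + r ^ 2) ^ 2 := by
  rcases abs_cases (1 + r ^ 3) with ⟨h1, h1'⟩ | ⟨h1, h1'⟩ <;>
  rcases abs_cases (r ^ 2 - r) with ⟨h2, h2'⟩ | ⟨h2, h2'⟩ <;>
  rcases abs_cases (r ^ 2 + r) with ⟨h3, h3'⟩ | ⟨h3, h3'⟩ <;>
  rw [h1, h2, h3] <;>
  nlinarith [sq_nonneg r, sq_nonneg (r - 1), sq_nonneg (r + 1), sq_nonneg (r ^ 2 - 1),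
    sq_nonneg (r ^ 2 + r), sq_nonneg (r ^ 2 - r)]

lemma key2 (r : ℝ) : |r ^ 2 - r| + 2 * |r ^ 2 + r| + |1 - r ^ 3| ≤ 2 * (1 + r ^ 2) ^ 2 := by
  have := key1 (-r)
  rw [show (1 : ℝ) + (-r) ^ 3 = 1 - r ^ 3 by ring, show (-r) ^ 2 - (-r) = r ^ 2 + r by ring,
    show (-r) ^ 2 + (-r) = r ^ 2 - r by ring, show (1 : ℝ) + (-r) ^ 2 = 1 + r ^ 2 by ring] at this
  linarith

set_option maxHeartbeats 1000000 in
/-- The bound `max{...} ≤ 2(1+r²)²`, and the resulting submultiplicativity estimate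
`‖v * w‖_{r,σ} ≤ 2σ·‖v‖_{r,σ}·‖w‖_{r,σ}`. -/
theorem normRS_mul_le_two_sigma (r : ℝ) :
    max (|1 + r ^ 3| + 2 * |r ^ 2 - r| + |r ^ 2 + r|)
        (|r ^ 2 - r| + 2 * |r ^ 2 + r| + |1 - r ^ 3|) ≤ 2 * (1 + r ^ 2) ^ 2 ∧
    ∀ σ : ℝ, 1 ≤ σ → ∀ v w : ℂ × ℂ,
      normRS r σ (cmul v w) ≤ 2 * σ * (normRS r σ v * normRS r σ w) := by
  refine ⟨max_le (key1 r) (key2 r), ?_⟩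
  intro σ hσ v w
  set A1 := ‖v.1 + (r : ℂ) * v.2‖ with hA1
  set B1 := ‖v.2 - (r : ℂ) * v.1‖ with hB1
  set A2 := ‖w.1 + (r : ℂ) * w.2‖ with hA2
  set B2 := ‖w.2 - (r : ℂ) * w.1‖ with hB2
  set N1 := normRS r σ v with hN1
  set N2 := normRS r σ w with hN2
  have hσ0 : (0 : ℝ) < σ := lt_of_lt_of_le one_pos hσ
  have hA1N : A1 ≤ N1 := le_max_left _ _
  have hA2N : A2 ≤ N2 := le_max_left _ _
  have hB1N : σ * B1 ≤ N1 := le_max_right _ _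
  have hB2N : σ * B2 ≤ N2 := le_max_right _ _
  have hB1N' : B1 ≤ N1 := le_trans (by nlinarith [norm_nonneg (v.2 - (r:ℂ)*v.1)]) hB1N
  have hB2N' : B2 ≤ N2 := le_trans (by nlinarith [norm_nonneg (w.2 - (r:ℂ)*w.1)]) hB2N
  have hA1nn : 0 ≤ A1 := norm_nonneg _
  have hA2nn : 0 ≤ A2 := norm_nonneg _
  have hB1nn : 0 ≤ B1 := norm_nonneg _
  have hB2nn : 0 ≤ B2 := norm_nonneg _
  have hN1nn : 0 ≤ N1 := le_trans hA1nn hA1N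
  have hN2nn : 0 ≤ N2 := le_trans hA2nn hA2N
  have hs : (0 : ℝ) < (1 + r ^ 2) ^ 2 := by positivity
  -- product bounds
  have pAA : A1 * A2 ≤ N1 * N2 := mul_le_mul hA1N hA2N hA2nn hN1nn
  have pAB : A1 * B2 ≤ N1 * N2 := mul_le_mul hA1N hB2N' hB2nn hN1nn
  have pBA : B1 * A2 ≤ N1 * N2 := mul_le_mul hB1N' hA2N hA2nn hN1nn
  have pBB : B1 * B2 ≤ N1 * N2 := mul_le_mul hB1N' hB2N' hB2nn hN1nn
  have pABσ : A1 * (σ * B2) ≤ N1 * N2 := mul_le_mul hA1N hB2N (by positivity) hN1nn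
  have pBAσ : (σ * B1) * A2 ≤ N1 * N2 := mul_le_mul hB1N hA2N hA2nn hN1nn
  have pBBσ : (σ * B1) * B2 ≤ N1 * N2 := mul_le_mul hB1N hB2N' hB2nn hN1nn
  -- algebraic identities
  have hid1 : (((1 + r ^ 2) ^ 2 : ℝ) : ℂ) * (v.1 * w.1 + (r : ℂ) * (v.2 * w.2)) =
      ((1 + r ^ 3 : ℝ) : ℂ) * ((v.1 + (r : ℂ) * v.2) * (w.1 + (r : ℂ) * w.2)) +
      ((r ^ 2 - r : ℝ) : ℂ) * ((v.1 + (r : ℂ) * v.2) * (w.2 - (r : ℂ) * w.1) +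
        (v.2 - (r : ℂ) * v.1) * (w.1 + (r : ℂ) * w.2)) +
      ((r ^ 2 + r : ℝ) : ℂ) * ((v.2 - (r : ℂ) * v.1) * (w.2 - (r : ℂ) * w.1)) := by
    push_cast; ring
  have hid2 : (((1 + r ^ 2) ^ 2 : ℝ) : ℂ) * (v.2 * w.2 - (r : ℂ) * (v.1 * w.1)) =
      ((r ^ 2 - r : ℝ) : ℂ) * ((v.1 + (r : ℂ) * v.2) * (w.1 + (r : ℂ) * w.2)) +
      ((r ^ 2 + r : ℝ) : ℂ) * ((v.1 + (r : ℂ) * v.2) * (w.2 - (r : ℂ) * w.1) +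
        (v.2 - (r : ℂ) * v.1) * (w.1 + (r : ℂ) * w.2)) +
      ((1 - r ^ 3 : ℝ) : ℂ) * ((v.2 - (r : ℂ) * v.1) * (w.2 - (r : ℂ) * w.1)) := by
    push_cast; ring
  have habs : ∀ (c : ℝ) (z : ℂ), ‖(c : ℂ) * z‖ = |c| * ‖z‖ := by
    intro c z; rw [norm_mul, Complex.norm_real, Real.norm_eq_abs]
  have hP : (1 + r ^ 2) ^ 2 * ‖v.1 * w.1 + (r : ℂ) * (v.2 * w.2)‖ ≤
      |1 + r ^ 3| * (A1 * A2) + |r ^ 2 - r| * (A1 * B2 + B1 * A2) + |r ^ 2 + r| * (B1 * B2) := by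
    have h0 : (1 + r ^ 2) ^ 2 * ‖v.1 * w.1 + (r : ℂ) * (v.2 * w.2)‖ =
        ‖(((1 + r ^ 2) ^ 2 : ℝ) : ℂ) * (v.1 * w.1 + (r : ℂ) * (v.2 * w.2))‖ := by
      rw [habs, abs_of_nonneg hs.le]
    rw [h0, hid1]
    refine le_trans (norm_add_le _ _) ?_
    refine le_trans (add_le_add_left (norm_add_le _ _) _) ?_
    rw [habs, habs, habs, norm_mul, norm_mul]
    refine add_le_add (add_le_add le_rfl ?_) le_rfl
    exact mul_le_mul_of_nonneg_left (le_trans (norm_add_le _ _)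
      (by rw [norm_mul, norm_mul])) (abs_nonneg _)
  have hQ : (1 + r ^ 2) ^ 2 * ‖v.2 * w.2 - (r : ℂ) * (v.1 * w.1)‖ ≤
      |r ^ 2 - r| * (A1 * A2) + |r ^ 2 + r| * (A1 * B2 + B1 * A2) + |1 - r ^ 3| * (B1 * B2) := by
    have h0 : (1 + r ^ 2) ^ 2 * ‖v.2 * w.2 - (r : ℂ) * (v.1 * w.1)‖ =
        ‖(((1 + r ^ 2) ^ 2 : ℝ) : ℂ) * (v.2 * w.2 - (r : ℂ) * (v.1 * w.1))‖ := by
      rw [habs, abs_of_nonneg hs.le]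
    rw [h0, hid2]
    refine le_trans (norm_add_le _ _) ?_
    refine le_trans (add_le_add_left (norm_add_le _ _) _) ?_
    rw [habs, habs, habs, norm_mul, norm_mul]
    refine add_le_add (add_le_add le_rfl ?_) le_rfl
    exact mul_le_mul_of_nonneg_left (le_trans (norm_add_le _ _)
      (by rw [norm_mul, norm_mul])) (abs_nonneg _)
  have k1 := key1 r
  have k2 := key2 r
  have habs1 : 0 ≤ |1 + r ^ 3| := abs_nonneg _
  have habs2 : 0 ≤ |r ^ 2 - r| := abs_nonneg _
  have habs3 : 0 ≤ |r ^ 2 + r| := abs_nonneg _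
  have habs4 : 0 ≤ |1 - r ^ 3| := abs_nonneg _
  have hNN : 0 ≤ N1 * N2 := mul_nonneg hN1nn hN2nn
  show max (‖v.1 * w.1 + (r : ℂ) * (v.2 * w.2)‖)
      (σ * ‖v.2 * w.2 - (r : ℂ) * (v.1 * w.1)‖) ≤ 2 * σ * (N1 * N2)
  clear hid1 hid2
  apply max_le
  · -- first branch
    have e1 : |1 + r ^ 3| * (A1 * A2) ≤ |1 + r ^ 3| * (N1 * N2) :=
      mul_le_mul_of_nonneg_left pAA habs1
    have e2 : |r ^ 2 - r| * (A1 * B2 + B1 * A2) ≤ |r ^ 2 - r| * (N1 * N2 + N1 * N2) :=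
      mul_le_mul_of_nonneg_left (add_le_add pAB pBA) habs2
    have e3 : |r ^ 2 + r| * (B1 * B2) ≤ |r ^ 2 + r| * (N1 * N2) :=
      mul_le_mul_of_nonneg_left pBB habs3
    have e4 := mul_le_mul_of_nonneg_right k1 hNN
    have e5 : (0:ℝ) ≤ (σ - 1) * ((1 + r ^ 2) ^ 2 * (N1 * N2)) :=
      mul_nonneg (by linarith) (mul_nonneg hs.le hNN)
    have hfin : (1 + r ^ 2) ^ 2 * ‖v.1 * w.1 + (r : ℂ) * (v.2 * w.2)‖ ≤
        (1 + r ^ 2) ^ 2 * (2 * σ * (N1 * N2)) := by linarith [hP, e1, e2, e3, e4, e5]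
    exact le_of_mul_le_mul_left hfin hs
  · -- second branch
    have hQσ := mul_le_mul_of_nonneg_left hQ hσ0.le
    have e1 : σ * (|r ^ 2 - r| * (A1 * A2)) ≤ σ * (|r ^ 2 - r| * (N1 * N2)) :=
      mul_le_mul_of_nonneg_left (mul_le_mul_of_nonneg_left pAA habs2) hσ0.le
    have e2 : |r ^ 2 + r| * (A1 * (σ * B2) + (σ * B1) * A2) ≤ |r ^ 2 + r| * (N1 * N2 + N1 * N2) :=
      mul_le_mul_of_nonneg_left (add_le_add pABσ pBAσ) habs3
    have e3 : |1 - r ^ 3| * ((σ * B1) * B2) ≤ |1 - r ^ 3| * (N1 * N2) :=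
      mul_le_mul_of_nonneg_left pBBσ habs4
    have e4 : (0:ℝ) ≤ (σ - 1) * ((2 * |r ^ 2 + r| + |1 - r ^ 3|) * (N1 * N2)) :=
      mul_nonneg (by linarith) (mul_nonneg (by positivity) hNN)
    have e5 := mul_le_mul_of_nonneg_left (mul_le_mul_of_nonneg_right k2 hNN) hσ0.le
    have hfin : (1 + r ^ 2) ^ 2 * (σ * ‖v.2 * w.2 - (r : ℂ) * (v.1 * w.1)‖) ≤
        (1 + r ^ 2) ^ 2 * (2 * σ * (N1 * N2)) := by linarith [hQσ, e1, e2, e3, e4, e5]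
    exact le_of_mul_le_mul_left hfin hs
end
end

section
/- For r ∈ ℝ and σ : ℕ → [1, ∞), A_{r,σ} is a subalgebra of c₀(ℕ), and for all f, g ∈ A_{r,σ} one has fg ∈ A_{r,σ}, ‖fg‖_{r,σ} ≤ ‖f‖_{r,σ}·‖g‖_{r,σ}, and ‖f‖_∞ ≤ ‖f‖_{r,σ}. -/
open Filter Topology

noncomputable section

lemma cube_sign_pos (r : ℝ) (h : -1 ≤ r) : 0 ≤ 1 + r^3 := by
  nlinarith [sq_nonneg (r-1), sq_nonneg (r+1)]

lemma poly_ineq (r : ℝ) : |1 + r^3| + 2*(|r| * |r-1|) + |r| * |r+1| ≤ 2*(1+r^2)^2 := by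
  rcases le_total r 0 with hr | hr
  · rcases le_total r (-1) with h1 | h1
    · rw [abs_of_nonpos (by nlinarith [sq_nonneg (r-1), sq_nonneg (r+1)]),
        abs_of_nonpos hr, abs_of_nonpos (by linarith), abs_of_nonpos (by linarith)]
      nlinarith [sq_nonneg r, sq_nonneg (r+1), sq_nonneg (r^2+r)]
    · rw [abs_of_nonneg (cube_sign_pos r h1), abs_of_nonpos hr,
        abs_of_nonpos (by linarith), abs_of_nonneg (by linarith)]
      nlinarith [sq_nonneg r, sq_nonneg (r+1), sq_nonneg (2*r+1), sq_nonneg (r^2+r)]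
  · rcases le_total r 1 with h1 | h1
    · rw [abs_of_nonneg (cube_sign_pos r (by linarith)), abs_of_nonneg hr,
        abs_of_nonpos (by linarith), abs_of_nonneg (by linarith)]
      nlinarith [sq_nonneg r, sq_nonneg (r-1), sq_nonneg (2*r-1), sq_nonneg (r^2-r)]
    · rw [abs_of_nonneg (cube_sign_pos r (by linarith)), abs_of_nonneg hr,
        abs_of_nonneg (by linarith), abs_of_nonneg (by linarith)]
      nlinarith [sq_nonneg r, sq_nonneg (r-1), sq_nonneg (r^2-r)]

lemma mul_est (r : ℝ) (a b c d : ℂ) (X Y : ℝ)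
    (hu : ‖a + r*b‖ ≤ X) (hv : ‖b - r*a‖ ≤ X)
    (hu' : ‖c + r*d‖ ≤ Y) (hv' : ‖d - r*c‖ ≤ Y) :
    ‖a*c + r*(b*d)‖ ≤ 2*(X*Y) := by
  have hX : 0 ≤ X := le_trans (norm_nonneg _) hu
  have hY : 0 ≤ Y := le_trans (norm_nonneg _) hu'
  have key : ((1+r^2:ℝ):ℂ)^2 * (a*c + r*(b*d)) =
      ((1+r^3:ℝ):ℂ) * ((a+r*b)*(c+r*d))
      + ((r*(r-1):ℝ):ℂ) * ((a+r*b)*(d-r*c) + (b-r*a)*(c+r*d))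
      + ((r*(r+1):ℝ):ℂ) * ((b-r*a)*(d-r*c)) := by push_cast; ring
  have hpos : (0:ℝ) < (1+r^2)^2 := by positivity
  have e1 : ‖((1+r^2:ℝ):ℂ)^2 * (a*c + r*(b*d))‖
      = (1+r^2)^2 * ‖a*c + r*(b*d)‖ := by
    rw [norm_mul, norm_pow, Complex.norm_real, Real.norm_eq_abs, abs_of_pos (by positivity)]
  have t1 : ‖((1+r^3:ℝ):ℂ) * ((a+r*b)*(c+r*d))‖ ≤ |1+r^3| * (X*Y) := by
    rw [norm_mul, norm_mul, Complex.norm_real, Real.norm_eq_abs]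
    exact mul_le_mul_of_nonneg_left
      (mul_le_mul hu hu' (norm_nonneg _) hX) (abs_nonneg _)
  have t2 : ‖((r*(r-1):ℝ):ℂ) * ((a+r*b)*(d-r*c) + (b-r*a)*(c+r*d))‖
      ≤ |r*(r-1)| * (X*Y + X*Y) := by
    rw [norm_mul, Complex.norm_real, Real.norm_eq_abs]
    refine mul_le_mul_of_nonneg_left (le_trans (norm_add_le _ _) ?_) (abs_nonneg _)
    rw [norm_mul, norm_mul]
    exact add_le_add (mul_le_mul hu hv' (norm_nonneg _) hX)
      (mul_le_mul hv hu' (norm_nonneg _) hX)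
  have t3 : ‖((r*(r+1):ℝ):ℂ) * ((b-r*a)*(d-r*c))‖ ≤ |r*(r+1)| * (X*Y) := by
    rw [norm_mul, norm_mul, Complex.norm_real, Real.norm_eq_abs]
    exact mul_le_mul_of_nonneg_left
      (mul_le_mul hv hv' (norm_nonneg _) hX) (abs_nonneg _)
  have habs : (1+r^2)^2 * ‖a*c + r*(b*d)‖ ≤
      |1+r^3| * (X*Y) + |r*(r-1)| * (X*Y + X*Y) + |r*(r+1)| * (X*Y) := by
    rw [← e1, key]
    exact le_trans (le_trans (norm_add_le _ _)
      (add_le_add (norm_add_le _ _) le_rfl)) (by linarith)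
  have hq := mul_le_mul_of_nonneg_right (poly_ineq r) (mul_nonneg hX hY)
  rw [abs_mul, abs_mul] at habs
  nlinarith [norm_nonneg (a*c + r*(b*d))]

lemma coord_est (r : ℝ) (a b : ℂ) (X : ℝ)
    (hu : ‖a + r*b‖ ≤ X) (hv : ‖b - r*a‖ ≤ X) :
    ‖a‖ ≤ 2*X := by
  have hX : 0 ≤ X := le_trans (norm_nonneg _) hu
  have key : ((1+r^2:ℝ):ℂ) * a = (a + r*b) - ((r:ℝ):ℂ) * (b - r*a) := by push_cast; ring
  have e1 : (1+r^2) * ‖a‖ = ‖((1+r^2:ℝ):ℂ) * a‖ := by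
    rw [norm_mul, Complex.norm_real, Real.norm_eq_abs, abs_of_pos (by positivity)]
  have t1 : ‖((1+r^2:ℝ):ℂ) * a‖ ≤ X + |r| * X := by
    rw [key]
    refine le_trans (norm_sub_le _ _) ?_
    rw [norm_mul, Complex.norm_real, Real.norm_eq_abs]
    exact add_le_add hu (mul_le_mul_of_nonneg_left hv (abs_nonneg _))
  have hr2 : 1 + |r| ≤ 2 * (1 + r^2) := by nlinarith [sq_abs r, abs_nonneg r, sq_nonneg (|r| - 1)]
  have hpos : (0:ℝ) < 1 + r^2 := by positivity
  nlinarith [norm_nonneg a, e1, t1, mul_le_mul_of_nonneg_right hr2 hX]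

lemma blockNorm_nonneg (r : ℝ) (σ : ℕ → ℝ) (hσ : ∀ n, 1 ≤ σ n) (f : ℕ → ℂ) (n : ℕ) :
    0 ≤ blockNorm r σ f n := by
  have hs : (0:ℝ) ≤ σ n := le_trans zero_le_one (hσ n)
  exact mul_nonneg (by linarith) (le_trans (norm_nonneg _) (le_max_left _ _))

lemma blockNorm_add_le (r : ℝ) (σ : ℕ → ℝ) (hσ : ∀ n, 1 ≤ σ n) (f g : ℕ → ℂ) (n : ℕ) :
    blockNorm r σ (f + g) n ≤ blockNorm r σ f n + blockNorm r σ g n := by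
  have hs : (0:ℝ) ≤ σ n := le_trans zero_le_one (hσ n)
  unfold blockNorm
  rw [← mul_add]
  refine mul_le_mul_of_nonneg_left ?_ (by linarith)
  simp only [Pi.add_apply]
  refine max_le ?_ ?_
  · calc ‖f (2*n) + g (2*n) + (r:ℂ) * (f (2*n+1) + g (2*n+1))‖
        ≤ ‖f (2*n) + (r:ℂ) * f (2*n+1)‖
          + ‖g (2*n) + (r:ℂ) * g (2*n+1)‖ := by
          rw [show f (2*n) + g (2*n) + (r:ℂ) * (f (2*n+1) + g (2*n+1))
              = (f (2*n) + (r:ℂ) * f (2*n+1)) + (g (2*n) + (r:ℂ) * g (2*n+1)) by ring]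
          exact norm_add_le _ _
      _ ≤ _ := add_le_add (le_max_left _ _) (le_max_left _ _)
  · calc σ n * ‖f (2*n+1) + g (2*n+1) - (r:ℂ) * (f (2*n) + g (2*n))‖
        ≤ σ n * (‖f (2*n+1) - (r:ℂ) * f (2*n)‖
            + ‖g (2*n+1) - (r:ℂ) * g (2*n)‖) := by
          refine mul_le_mul_of_nonneg_left ?_ hs
          rw [show f (2*n+1) + g (2*n+1) - (r:ℂ) * (f (2*n) + g (2*n))
              = (f (2*n+1) - (r:ℂ) * f (2*n)) + (g (2*n+1) - (r:ℂ) * g (2*n)) by ring]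
          exact norm_add_le _ _
      _ = σ n * ‖f (2*n+1) - (r:ℂ) * f (2*n)‖
            + σ n * ‖g (2*n+1) - (r:ℂ) * g (2*n)‖ := by ring
      _ ≤ _ := add_le_add (le_max_right _ _) (le_max_right _ _)

lemma blockNorm_smul_le (r : ℝ) (σ : ℕ → ℝ) (hσ : ∀ n, 1 ≤ σ n) (c : ℂ) (f : ℕ → ℂ) (n : ℕ) :
    blockNorm r σ (c • f) n ≤ ‖c‖ * blockNorm r σ f n := by
  have hs : (0:ℝ) ≤ σ n := le_trans zero_le_one (hσ n)
  unfold blockNorm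
  rw [show ‖c‖ * (2 * σ n * max (‖f (2 * n) + (r:ℂ) * f (2 * n + 1)‖)
        (σ n * ‖f (2 * n + 1) - (r:ℂ) * f (2 * n)‖))
      = 2 * σ n * (‖c‖ * max (‖f (2 * n) + (r:ℂ) * f (2 * n + 1)‖)
        (σ n * ‖f (2 * n + 1) - (r:ℂ) * f (2 * n)‖)) by ring]
  refine mul_le_mul_of_nonneg_left ?_ (by linarith)
  simp only [Pi.smul_apply, smul_eq_mul]
  refine max_le ?_ ?_
  · rw [show c * f (2*n) + (r:ℂ) * (c * f (2*n+1)) = c * (f (2*n) + (r:ℂ) * f (2*n+1)) by ring,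
      norm_mul]
    exact mul_le_mul_of_nonneg_left (le_max_left _ _) (norm_nonneg c)
  · rw [show c * f (2*n+1) - (r:ℂ) * (c * f (2*n)) = c * (f (2*n+1) - (r:ℂ) * f (2*n)) by ring,
      norm_mul, show σ n * (‖c‖ * ‖f (2*n+1) - (r:ℂ) * f (2*n)‖)
        = ‖c‖ * (σ n * ‖f (2*n+1) - (r:ℂ) * f (2*n)‖) by ring]
    exact mul_le_mul_of_nonneg_left (le_max_right _ _) (norm_nonneg c)

lemma blockNorm_mul_le (r : ℝ) (σ : ℕ → ℝ) (hσ : ∀ n, 1 ≤ σ n) (f g : ℕ → ℂ) (n : ℕ) :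
    blockNorm r σ (f * g) n ≤ blockNorm r σ f n * blockNorm r σ g n := by
  have hs1 : (1:ℝ) ≤ σ n := hσ n
  have hs : (0:ℝ) ≤ σ n := le_trans zero_le_one hs1
  set a := f (2*n); set b := f (2*n+1); set c := g (2*n); set d := g (2*n+1)
  set X := max (‖a + (r:ℂ) * b‖) (σ n * ‖b - (r:ℂ) * a‖) with hXdef
  set Y := max (‖c + (r:ℂ) * d‖) (σ n * ‖d - (r:ℂ) * c‖) with hYdef
  have hX0 : 0 ≤ X := le_trans (norm_nonneg _) (le_max_left _ _)
  have hY0 : 0 ≤ Y := le_trans (norm_nonneg _) (le_max_left _ _)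
  have hu : ‖a + (r:ℂ) * b‖ ≤ X := le_max_left _ _
  have hv : ‖b - (r:ℂ) * a‖ ≤ X :=
    le_trans (le_mul_of_one_le_left (norm_nonneg _) hs1) (le_max_right _ _)
  have hu' : ‖c + (r:ℂ) * d‖ ≤ Y := le_max_left _ _
  have hv' : ‖d - (r:ℂ) * c‖ ≤ Y :=
    le_trans (le_mul_of_one_le_left (norm_nonneg _) hs1) (le_max_right _ _)
  have hU : ‖a*c + (r:ℂ) * (b*d)‖ ≤ 2*(X*Y) := mul_est r a b c d X Y hu hv hu' hv'
  have hV : ‖b*d - (r:ℂ) * (a*c)‖ ≤ 2*(X*Y) := by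
    have h := mul_est (-r) b a d c X Y
      (by rw [show b + ((-r:ℝ):ℂ) * a = b - (r:ℂ) * a by push_cast; ring]; exact hv)
      (by rw [show a - ((-r:ℝ):ℂ) * b = a + (r:ℂ) * b by push_cast; ring]; exact hu)
      (by rw [show d + ((-r:ℝ):ℂ) * c = d - (r:ℂ) * c by push_cast; ring]; exact hv')
      (by rw [show c - ((-r:ℝ):ℂ) * d = c + (r:ℂ) * d by push_cast; ring]; exact hu')
    rw [show b*d + ((-r:ℝ):ℂ) * (a*c) = b*d - (r:ℂ) * (a*c) by push_cast; ring] at h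
    exact h
  unfold blockNorm
  simp only [Pi.mul_apply]
  rw [show (2 * σ n * max (‖a + (r:ℂ) * b‖) (σ n * ‖b - (r:ℂ) * a‖))
      * (2 * σ n * max (‖c + (r:ℂ) * d‖) (σ n * ‖d - (r:ℂ) * c‖))
      = 2 * σ n * (2 * σ n * (X * Y)) by rw [← hXdef, ← hYdef]; ring]
  refine mul_le_mul_of_nonneg_left (max_le ?_ ?_) (by linarith)
  · have h2 : 2*(X*Y) ≤ 2 * σ n * (X*Y) := by nlinarith [mul_nonneg hX0 hY0]
    exact le_trans hU h2
  · calc σ n * ‖b*d - (r:ℂ) * (a*c)‖ ≤ σ n * (2*(X*Y)) :=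
        mul_le_mul_of_nonneg_left hV hs
      _ = 2 * σ n * (X*Y) := by ring

/-- `A_{r,σ}` is a subalgebra of `c₀(ℕ)`, the norm `‖·‖_{r,σ}` is submultiplicative on it,
and it dominates the sup norm. -/
theorem Aset_subalgebra (r : ℝ) (σ : ℕ → ℝ) (hσ : ∀ n, 1 ≤ σ n) :
    (Aset r σ ⊆ c0) ∧
    (∀ f ∈ Aset r σ, ∀ g ∈ Aset r σ, f + g ∈ Aset r σ) ∧
    (∀ (c : ℂ), ∀ f ∈ Aset r σ, c • f ∈ Aset r σ) ∧
    (∀ f ∈ Aset r σ, ∀ g ∈ Aset r σ,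
      f * g ∈ Aset r σ ∧ Anorm r σ (f * g) ≤ Anorm r σ f * Anorm r σ g) ∧
    (∀ f ∈ Aset r σ, supNorm f ≤ Anorm r σ f) := by
  refine ⟨fun f hf => hf.1, ?_, ?_, ?_, ?_⟩
  · intro f hf g hg
    refine ⟨by have h := hf.1.add hg.1; simp only [add_zero] at h; exact h, ?_⟩
    exact squeeze_zero (fun n => blockNorm_nonneg r σ hσ (f+g) n)
      (fun n => blockNorm_add_le r σ hσ f g n) (by simpa using hf.2.add hg.2)
  · intro c f hf
    refine ⟨by have h := hf.1.const_mul c; simp only [mul_zero] at h; exact h, ?_⟩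
    exact squeeze_zero (fun n => blockNorm_nonneg r σ hσ (c • f) n)
      (fun n => blockNorm_smul_le r σ hσ c f n)
      (by simpa using hf.2.const_mul (‖c‖))
  · intro f hf g hg
    have bddf : BddAbove (Set.range (blockNorm r σ f)) := hf.2.bddAbove_range
    have bddg : BddAbove (Set.range (blockNorm r σ g)) := hg.2.bddAbove_range
    have hAf : 0 ≤ Anorm r σ f :=
      le_trans (blockNorm_nonneg r σ hσ f 0) (le_ciSup bddf 0)
    have hAg : 0 ≤ Anorm r σ g :=
      le_trans (blockNorm_nonneg r σ hσ g 0) (le_ciSup bddg 0)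
    refine ⟨⟨by have h := hf.1.mul hg.1; simp only [mul_zero] at h; exact h, ?_⟩, ?_⟩
    · exact squeeze_zero (fun n => blockNorm_nonneg r σ hσ (f*g) n)
        (fun n => blockNorm_mul_le r σ hσ f g n) (by simpa using hf.2.mul hg.2)
    · refine ciSup_le fun n => le_trans (blockNorm_mul_le r σ hσ f g n) ?_
      exact mul_le_mul (le_ciSup bddf n) (le_ciSup bddg n)
        (blockNorm_nonneg r σ hσ g n) hAf
  · intro f hf
    have bddf : BddAbove (Set.range (blockNorm r σ f)) := hf.2.bddAbove_range
    refine ciSup_le fun n => ?_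
    obtain ⟨m, hm | hm⟩ := Nat.even_or_odd' n
    all_goals {
      subst hm
      have hs1 : (1:ℝ) ≤ σ m := hσ m
      set a := f (2*m); set b := f (2*m+1)
      set X := max (‖a + (r:ℂ) * b‖) (σ m * ‖b - (r:ℂ) * a‖) with hXdef
      have hX0 : 0 ≤ X := le_trans (norm_nonneg _) (le_max_left _ _)
      have hu : ‖a + (r:ℂ) * b‖ ≤ X := le_max_left _ _
      have hv : ‖b - (r:ℂ) * a‖ ≤ X :=
        le_trans (le_mul_of_one_le_left (norm_nonneg _) hs1) (le_max_right _ _)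
      have hblock : blockNorm r σ f m = 2 * σ m * X := rfl
      have hle : blockNorm r σ f m ≤ Anorm r σ f := le_ciSup bddf m
      first
      | · -- even case : |a| ≤ 2X
          have h := coord_est r a b X hu hv
          have : ‖a‖ ≤ blockNorm r σ f m := by
            rw [hblock]; nlinarith
          exact le_trans this hle
      | · have h := coord_est (-r) b a X
            (by rw [show b + ((-r:ℝ):ℂ) * a = b - (r:ℂ) * a by push_cast; ring]; exact hv)
            (by rw [show a - ((-r:ℝ):ℂ) * b = a + (r:ℂ) * b by push_cast; ring]; exact hu)
          have : ‖b‖ ≤ blockNorm r σ f m := by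
            rw [hblock]; nlinarith
          exact le_trans this hle
    }
end
end

section
/- Let σ : ℕ → [1, ∞) be unbounded. Then the algebra A_{1,σ} (the case r = 1) is not an ideal in c₀(ℕ): there exist f ∈ A_{1,σ} and g ∈ c₀(ℕ) such that the pointwise product fg does not lie in A_{1,σ}. -/
open Filter Topology
open scoped Classical

noncomputable section

/-- Auxiliary strictly increasing subsequence along which σ is large. -/
noncomputable def phiAux (σ : ℕ → ℝ)
    (key : ∀ k m : ℕ, ∃ n, m < n ∧ ((k:ℝ)+1)^2 < σ n) : ℕ → ℕ
  | 0 => (key 0 0).choose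
  | k+1 => (key (k+1) (phiAux σ key k)).choose

lemma phiAux_lt (σ : ℕ → ℝ) (key : ∀ k m : ℕ, ∃ n, m < n ∧ ((k:ℝ)+1)^2 < σ n) (k : ℕ) :
    phiAux σ key k < phiAux σ key (k+1) :=
  ((key (k+1) (phiAux σ key k)).choose_spec).1

lemma phiAux_sigma (σ : ℕ → ℝ) (key : ∀ k m : ℕ, ∃ n, m < n ∧ ((k:ℝ)+1)^2 < σ n) (k : ℕ) :
    ((k:ℝ)+1)^2 < σ (phiAux σ key k) := by
  cases k with
  | zero => exact ((key 0 0).choose_spec).2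
  | succ k => exact ((key (k+1) (phiAux σ key k)).choose_spec).2

noncomputable def Aseq (σ : ℕ → ℝ) (φ : ℕ → ℕ) (n : ℕ) : ℝ :=
  if h : ∃ k, φ k = n then 1/((h.choose + 1 : ℝ) * σ n) else 0

noncomputable def Bseq (σ : ℕ → ℝ) (φ : ℕ → ℕ) (n : ℕ) : ℝ :=
  if h : ∃ k, φ k = n then (h.choose + 1 : ℝ)/σ n else 0

lemma Aseq_apply (σ : ℕ → ℝ) (φ : ℕ → ℕ) (hφ : Function.Injective φ) (k : ℕ) :
    Aseq σ φ (φ k) = 1/(((k:ℝ)+1) * σ (φ k)) := by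
  unfold Aseq
  rw [dif_pos ⟨k, rfl⟩]
  have h : ∃ k', φ k' = φ k := ⟨k, rfl⟩
  have := hφ h.choose_spec
  rw [this]

lemma Bseq_apply (σ : ℕ → ℝ) (φ : ℕ → ℕ) (hφ : Function.Injective φ) (k : ℕ) :
    Bseq σ φ (φ k) = ((k:ℝ)+1)/σ (φ k) := by
  unfold Bseq
  rw [dif_pos ⟨k, rfl⟩]
  have h : ∃ k', φ k' = φ k := ⟨k, rfl⟩
  have := hφ h.choose_spec
  rw [this]

lemma Aseq_eq_zero (σ : ℕ → ℝ) (φ : ℕ → ℕ) (n : ℕ) (h : ¬ ∃ k, φ k = n) :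
    Aseq σ φ n = 0 := by unfold Aseq; rw [dif_neg h]

lemma Bseq_eq_zero (σ : ℕ → ℝ) (φ : ℕ → ℕ) (n : ℕ) (h : ¬ ∃ k, φ k = n) :
    Bseq σ φ n = 0 := by unfold Bseq; rw [dif_neg h]

lemma Aseq_nonneg (σ : ℕ → ℝ) (φ : ℕ → ℕ) (hσ : ∀ n, 0 < σ n) (n : ℕ) :
    0 ≤ Aseq σ φ n := by
  unfold Aseq; split
  · have := hσ n; positivity
  · exact le_rfl

/-- For unbounded `σ`, `A_{1,σ}` is not an ideal in `c₀(ℕ)`. -/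
theorem Aset_one_not_ideal (σ : ℕ → ℝ) (hσ : ∀ n, 1 ≤ σ n)
    (hσunb : ∀ M : ℝ, ∃ n, M < σ n) :
    ∃ f ∈ Aset 1 σ, ∃ g ∈ c0, f * g ∉ Aset 1 σ := by
  have hσpos : ∀ n, 0 < σ n := fun n => lt_of_lt_of_le one_pos (hσ n)
  -- key existence lemma
  have key : ∀ k m : ℕ, ∃ n, m < n ∧ ((k:ℝ)+1)^2 < σ n := by
    intro k m
    obtain ⟨n, hn⟩ := hσunb (max (((k:ℝ)+1)^2)
      ((Finset.range (m+1)).sup' ⟨0, Finset.mem_range.mpr (Nat.succ_pos m)⟩ σ))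
    refine ⟨n, ?_, lt_of_le_of_lt (le_max_left _ _) hn⟩
    by_contra h
    push_neg at h
    have hle : σ n ≤ (Finset.range (m+1)).sup' ⟨0, Finset.mem_range.mpr (Nat.succ_pos m)⟩ σ :=
      Finset.le_sup' σ (Finset.mem_range.mpr (by omega))
    exact absurd hn (not_lt.mpr (hle.trans (le_max_right _ _)))
  set φ : ℕ → ℕ := phiAux σ key with hφdef
  have hmono : StrictMono φ := strictMono_nat_of_lt_succ (phiAux_lt σ key)
  have hinj : Function.Injective φ := hmono.injective
  have hσφ : ∀ k : ℕ, ((k:ℝ)+1)^2 < σ (φ k) := phiAux_sigma σ key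
  have hφk : ∀ k, k ≤ φ k := fun k => hmono.le_apply
  set A : ℕ → ℝ := Aseq σ φ with hAdef
  set B : ℕ → ℝ := Bseq σ φ with hBdef
  have hAval : ∀ k, A (φ k) = 1/(((k:ℝ)+1) * σ (φ k)) := Aseq_apply σ φ hinj
  have hBval : ∀ k, B (φ k) = ((k:ℝ)+1)/σ (φ k) := Bseq_apply σ φ hinj
  have hAnn : ∀ n, 0 ≤ A n := Aseq_nonneg σ φ hσpos
  have hBnn : ∀ n, 0 ≤ B n := by
    intro n
    by_cases h : ∃ k, φ k = n
    · obtain ⟨k, rfl⟩ := h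
      rw [hBval k]
      have := hσpos (φ k)
      positivity
    · rw [hBdef, Bseq_eq_zero σ φ n h]
  -- pointwise bounds beyond φ K
  have hAbound : ∀ K n, φ K < n → A n ≤ 1/((K:ℝ)+1) := by
    intro K n hn
    by_cases h : ∃ k, φ k = n
    · obtain ⟨k, rfl⟩ := h
      have hk : K < k := by
        by_contra hc
        exact absurd hn (not_lt.mpr (hmono.monotone (by omega)))
      rw [hAval k]
      have h1 : ((K:ℝ)+1) ≤ ((k:ℝ)+1) * σ (φ k) := by
        have : ((K:ℝ)+1) ≤ (k:ℝ)+1 := by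
          have : (K:ℝ) ≤ k := Nat.cast_le.mpr hk.le
          linarith
        nlinarith [hσ (φ k), hσpos (φ k)]
      exact one_div_le_one_div_of_le (by positivity) h1
    · rw [hAdef, Aseq_eq_zero σ φ n h]
      positivity
  have hBbound : ∀ K n, φ K < n → B n ≤ 1/((K:ℝ)+1) := by
    intro K n hn
    by_cases h : ∃ k, φ k = n
    · obtain ⟨k, rfl⟩ := h
      have hk : K < k := by
        by_contra hc
        exact absurd hn (not_lt.mpr (hmono.monotone (by omega)))
      rw [hBval k]
      have h2 : ((k:ℝ)+1)/σ (φ k) ≤ 1/((k:ℝ)+1) := by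
        rw [div_le_div_iff₀ (hσpos (φ k)) (by positivity)]
        nlinarith [hσφ k]
      refine h2.trans ?_
      have : ((K:ℝ)+1) ≤ (k:ℝ)+1 := by
        have : (K:ℝ) ≤ k := Nat.cast_le.mpr hk.le
        linarith
      exact one_div_le_one_div_of_le (by positivity) this
    · rw [hBdef, Bseq_eq_zero σ φ n h]
      positivity
  -- the functions
  set f : ℕ → ℂ := fun m => ((A (m/2) : ℝ) : ℂ) with hfdef
  set g : ℕ → ℂ := fun m => if m % 2 = 0 then ((B (m/2) : ℝ) : ℂ) else 0 with hgdef
  have hf2n : ∀ n, f (2*n) = ((A n : ℝ) : ℂ) := by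
    intro n; rw [hfdef]; simp only; rw [show 2*n/2 = n by omega]
  have hf2n1 : ∀ n, f (2*n+1) = ((A n : ℝ) : ℂ) := by
    intro n; rw [hfdef]; simp only; rw [show (2*n+1)/2 = n by omega]
  have hg2n : ∀ n, g (2*n) = ((B n : ℝ) : ℂ) := by
    intro n; rw [hgdef]; simp only
    rw [if_pos (by omega), show 2*n/2 = n by omega]
  have hg2n1 : ∀ n, g (2*n+1) = 0 := by
    intro n; rw [hgdef]; simp only
    rw [if_neg (by omega)]
  -- helper for tendsto
  have hsmall : ∀ c : ℕ → ℝ, (∀ K : ℕ, ∃ N, ∀ n ≥ N, |c n| ≤ 4/((K:ℝ)+1)) →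
      Tendsto c atTop (nhds (0:ℝ)) := by
    intro c hc
    rw [Metric.tendsto_atTop]
    intro ε hε
    obtain ⟨K, hK⟩ := exists_nat_gt (4/ε)
    obtain ⟨N, hN⟩ := hc K
    refine ⟨N, fun n hn => ?_⟩
    rw [Real.dist_eq, sub_zero]
    refine lt_of_le_of_lt (hN n hn) ?_
    rw [div_lt_iff₀ (by positivity)]
    have h4 : 4/ε < (K:ℝ)+1 := by linarith
    calc (4:ℝ) = ε * (4/ε) := by field_simp
      _ < ε * ((K:ℝ)+1) := mul_lt_mul_of_pos_left h4 hε
  -- block norm of f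
  have hblockf : ∀ n, blockNorm 1 σ f n = 4 * σ n * A n := by
    intro n
    rw [blockNorm, hf2n n, hf2n1 n]
    rw [show ((A n:ℝ):ℂ) + (1:ℝ) * ((A n:ℝ):ℂ) = ((2*A n : ℝ):ℂ) by push_cast; ring]
    rw [show ((A n:ℝ):ℂ) - (1:ℝ) * ((A n:ℝ):ℂ) = 0 by push_cast; ring]
    rw [Complex.norm_real, Real.norm_eq_abs, norm_zero, mul_zero, abs_of_nonneg (by linarith [hAnn n]),
      max_eq_left (by linarith [hAnn n])]
    ring
  -- block norm of f*g
  have hblockfg : ∀ n, blockNorm 1 σ (f*g) n = 2 * σ n * (σ n * (A n * B n)) := by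
    intro n
    rw [blockNorm]
    simp only [Pi.mul_apply]
    rw [hf2n n, hf2n1 n, hg2n n, hg2n1 n, mul_zero]
    rw [show ((A n:ℝ):ℂ) * ((B n:ℝ):ℂ) + (1:ℝ)*0 = ((A n * B n : ℝ):ℂ) by push_cast; ring]
    rw [show (0:ℂ) - (1:ℝ) * (((A n:ℝ):ℂ) * ((B n:ℝ):ℂ)) = ((-(A n * B n) : ℝ):ℂ) by push_cast; ring]
    rw [Complex.norm_real, Complex.norm_real, Real.norm_eq_abs, Real.norm_eq_abs, abs_neg,
      abs_of_nonneg (mul_nonneg (hAnn n) (hBnn n))]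
    rw [max_eq_right (by nlinarith [hσ n, hAnn n, hBnn n, mul_nonneg (hAnn n) (hBnn n)])]
  refine ⟨f, ⟨?_, ?_⟩, g, ?_, ?_⟩
  · -- f ∈ c0
    have : Tendsto (fun m => ‖f m‖) atTop (nhds 0) := by
      apply hsmall
      intro K
      refine ⟨2*φ K + 2, fun m hm => ?_⟩
      have habs : ‖f m‖ = A (m/2) := by
        rw [hfdef]; simp only [Complex.norm_real, Real.norm_eq_abs]
        exact abs_of_nonneg (hAnn _)
      rw [abs_of_nonneg (by rw [habs]; exact hAnn _), habs]
      have : φ K < m/2 := by omega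
      refine (hAbound K _ this).trans ?_
      exact div_le_div_of_nonneg_right (by norm_num) (by positivity)
    rw [c0, Set.mem_setOf_eq, tendsto_zero_iff_norm_tendsto_zero]
    simpa using this
  · -- blockNorm f → 0
    apply hsmall
    intro K
    refine ⟨φ K + 1, fun n hn => ?_⟩
    rw [hblockf n]
    have hφn : φ K < n := by omega
    rw [abs_of_nonneg (by have h1 := hAnn n; have h2 := (hσpos n).le; positivity)]
    by_cases h : ∃ k, φ k = n
    · obtain ⟨k, rfl⟩ := h
      have hk : K < k := by
        by_contra hc
        exact absurd hφn (not_lt.mpr (hmono.monotone (by omega)))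
      rw [hAval k]
      have hσ0 : σ (φ k) ≠ 0 := (hσpos _).ne'
      have hk0 : ((k:ℝ)+1) ≠ 0 := by positivity
      rw [show 4 * σ (φ k) * (1/(((k:ℝ)+1) * σ (φ k))) = 4/((k:ℝ)+1) by
        field_simp]
      have hKk : (K:ℝ) ≤ k := Nat.cast_le.mpr hk.le
      exact div_le_div_of_nonneg_left (by norm_num) (by positivity) (by linarith)
    · rw [hAdef, Aseq_eq_zero σ φ n h, mul_zero]
      positivity
  · -- g ∈ c0
    have : Tendsto (fun m => ‖g m‖) atTop (nhds 0) := by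
      apply hsmall
      intro K
      refine ⟨2*φ K + 2, fun m hm => ?_⟩
      have habs : ‖g m‖ ≤ B (m/2) := by
        rw [hgdef]; simp only
        split
        · rw [Complex.norm_real, Real.norm_eq_abs]
          exact le_of_eq (abs_of_nonneg (hBnn _))
        · simpa using hBnn (m/2)
      rw [abs_of_nonneg (norm_nonneg _)]
      refine habs.trans ?_
      have : φ K < m/2 := by omega
      refine (hBbound K _ this).trans ?_
      exact div_le_div_of_nonneg_right (by norm_num) (by positivity)
    rw [c0, Set.mem_setOf_eq, tendsto_zero_iff_norm_tendsto_zero]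
    simpa using this
  · -- f * g ∉ Aset
    rintro ⟨-, ht⟩
    rw [Metric.tendsto_atTop] at ht
    obtain ⟨N, hN⟩ := ht 1 one_pos
    have h2 : blockNorm 1 σ (f*g) (φ N) = 2 := by
      rw [hblockfg (φ N), hAval N, hBval N]
      have hσne : σ (φ N) ≠ 0 := (hσpos (φ N)).ne'
      have hN0 : ((N:ℝ)+1) ≠ 0 := by positivity
      field_simp
    have := hN (φ N) (hφk N)
    rw [h2, Real.dist_eq, sub_zero] at this
    norm_num at this
end
end
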